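/- Every nilpotent subgroup of the symmetric group Sym(n) has order at most 2^n. -/

import Mathlib

open Equiv MulAction Subgroup

section Aux

/-- A nontrivial nilpotent group has nontrivial center. -/
private theorem aux_center_nontrivial {G : Type*} [Group G] [Nontrivial G]
    (h : Group.IsNilpotent G) : Nontrivial (Subgroup.center G) := by
  by_contra hc
  have hbot : Subgroup.center G = ⊥ := by
    rw [Subgroup.eq_bot_iff_forall]
    intro x hx
    by_contra hx1
    exact hc ⟨⟨x, hx⟩, 1, by simp [Subtype.ext_iff, hx1]⟩
  have hall : ∀ n, Subgroup.upperCentralSeries G n = ⊥ := by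
    intro n
    induction n with
    | zero => simp
    | succ n ih =>
      rw [eq_bot_iff]
      intro x hx
      rw [Subgroup.mem_upperCentralSeries_succ_iff] at hx
      have hx' : x ∈ Subgroup.center G := by
        rw [Subgroup.mem_center_iff]
        intro y
        have := hx y
        rw [ih, Subgroup.mem_bot] at this
        have : x * y * x⁻¹ = y := by
          have := mul_eq_one_iff_eq_inv.mp this
          rw [this]; simp
        calc y * x = (x * y * x⁻¹) * x := by rw [this]
          _ = x * y := by group
      rw [hbot] at hx'
      exact hx'
  obtain ⟨n, hn⟩ := h
  rw [hall n] at hn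
  obtain ⟨a, b, hab⟩ := exists_pair_ne G
  exact hab (by
    have ha : a ∈ (⊥ : Subgroup G) := hn ▸ Subgroup.mem_top a
    have hb : b ∈ (⊥ : Subgroup G) := hn ▸ Subgroup.mem_top b
    rw [Subgroup.mem_bot] at ha hb
    rw [ha, hb])

variable {α : Type*}

private theorem aux_orbitRel_iff {z : Perm α} {x y : α} :
    MulAction.orbitRel ↥(Subgroup.zpowers z) α x y ↔ ∃ k : ℤ, z ^ k • y = x := by
  rw [MulAction.orbitRel_apply]
  constructor
  · rintro ⟨⟨u, hu⟩, rfl⟩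
    obtain ⟨k, hk⟩ := Subgroup.mem_zpowers_iff.mp hu
    exact ⟨k, by simp [← hk]⟩
  · rintro ⟨k, rfl⟩
    exact ⟨⟨z ^ k, Subgroup.zpow_mem _ (Subgroup.mem_zpowers z) k⟩, rfl⟩

/-- The map induced on `z`-orbits by a permutation commuting with `z`. -/
private def blockMap (z g : Perm α) (hg : Commute z g) :
    MulAction.orbitRel.Quotient ↥(Subgroup.zpowers z) α →
      MulAction.orbitRel.Quotient ↥(Subgroup.zpowers z) α :=
  Quotient.map' (fun x => g x) (by
    intro x y h
    rw [aux_orbitRel_iff] at h ⊢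
    obtain ⟨k, rfl⟩ := h
    refine ⟨k, ?_⟩
    have hc : Commute (z ^ k) g := (hg.zpow_left k)
    have h2 := Equiv.ext_iff.mp hc.eq y
    simp only [Equiv.Perm.mul_apply] at h2
    simp [Equiv.Perm.smul_def, h2])

private theorem blockMap_mk (z g : Perm α) (hg : Commute z g) (x : α) :
    blockMap z g hg (Quotient.mk'' x) = Quotient.mk'' (g x) := rfl

private theorem blockMap_congr (z : Perm α) {g g' : Perm α} (hg : Commute z g)
    (hg' : Commute z g') (h : g = g')
    (q : MulAction.orbitRel.Quotient ↥(Subgroup.zpowers z) α) :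
    blockMap z g hg q = blockMap z g' hg' q := by subst h; rfl

private theorem blockMap_comp (z g g' : Perm α) (hg : Commute z g) (hg' : Commute z g')
    (q : MulAction.orbitRel.Quotient ↥(Subgroup.zpowers z) α) :
    blockMap z g hg (blockMap z g' hg' q) = blockMap z (g * g') (hg.mul_right hg') q := by
  induction q using Quotient.inductionOn'
  rfl

private theorem blockMap_one (z : Perm α) (q : MulAction.orbitRel.Quotient ↥(Subgroup.zpowers z) α) :
    blockMap z 1 (Commute.one_right z) q = q := by
  induction q using Quotient.inductionOn'
  rfl

/-- The permutation of the set of `z`-orbits induced by `g` commuting with `z`. -/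
private def blockPerm (z g : Perm α) (hg : Commute z g) :
    Perm (MulAction.orbitRel.Quotient ↥(Subgroup.zpowers z) α) where
  toFun := blockMap z g hg
  invFun := blockMap z g⁻¹ (hg.inv_right)
  left_inv := fun q => by
    rw [blockMap_comp]
    rw [blockMap_congr z _ (Commute.one_right z) (by group) q]
    exact blockMap_one z q
  right_inv := fun q => by
    rw [blockMap_comp]
    rw [blockMap_congr z _ (Commute.one_right z) (by group) q]
    exact blockMap_one z q

end Aux

section Main

variable {α : Type*} [Finite α]

private theorem aux_main : ∀ (n : ℕ) (α : Type) (_ : Finite α), Nat.card α ≤ n →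
    ∀ (N : Subgroup (Equiv.Perm α)), Group.IsNilpotent N → Nat.card N ≤ 2 ^ Nat.card α := by
  intro n
  induction n using Nat.strong_induction_on with
  | _ n IH =>
  intro α _ hcard N hN
  classical
  rcases subsingleton_or_nontrivial N with hns | hns
  · have : Nat.card N = 1 := Nat.card_eq_one_iff_unique.mpr ⟨inferInstance, inferInstance⟩
    rw [this]
    exact Nat.one_le_two_pow
  -- N is nontrivial: find a central element of prime order
  have hZnt : Nontrivial (Subgroup.center N) := aux_center_nontrivial hN
  have hfin : Finite N := inferInstance
  have h2 : 2 ≤ Nat.card (Subgroup.center N) :=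
    Finite.one_lt_card_iff_nontrivial.mpr hZnt
  set p := (Nat.card (Subgroup.center N)).minFac with hpdef
  have hp : p.Prime := Nat.minFac_prime (by omega)
  haveI : Fact p.Prime := ⟨hp⟩
  obtain ⟨z₀, hz₀⟩ := exists_prime_orderOf_dvd_card' (G := Subgroup.center N) p
    (Nat.minFac_dvd _)
  set z : Perm α := N.subtype ((Subgroup.center N).subtype z₀) with hzdef
  have hzord : orderOf z = p := by
    rw [hzdef, orderOf_injective _ (Subgroup.subtype_injective _),
      orderOf_injective _ (Subgroup.subtype_injective _)]
    exact hz₀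
  have hzN : z ∈ N := ((Subgroup.center N).subtype z₀).2
  have hz1 : z ≠ 1 := by
    intro h
    rw [h, orderOf_one] at hzord
    exact hp.one_lt.ne' hzord.symm
  have hcommN : ∀ g : Perm α, g ∈ N → Commute z g := by
    intro g hg
    have h' := Subgroup.mem_center_iff.mp z₀.2 ⟨g, hg⟩
    have h'' := congrArg (N.subtype) h'
    simp only [map_mul] at h''
    exact h''.symm
  -- α is nonempty since z ≠ 1
  have hmoved : ∃ x, z x ≠ x := by
    by_contra hmv
    push_neg at hmv
    exact hz1 (Equiv.ext hmv)
  by_cases hfix : ∃ x, z x = x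
  · -- Case A : z has a fixed point; split α into fixed and moved points of z
    have hpres : ∀ (g : Perm α), g ∈ N → ∀ x : α, z x = x ↔ z (g x) = g x := by
      intro g hg x
      have hc := hcommN g hg
      have happ := Equiv.ext_iff.mp hc.eq x
      simp only [Equiv.Perm.mul_apply] at happ
      constructor
      · intro h
        rw [happ, h]
      · intro h
        rw [happ] at h
        exact g.injective h
    have hpres' : ∀ (g : Perm α), g ∈ N → ∀ x : α, ¬z x = x ↔ ¬z (g x) = g x :=
      fun g hg x => not_congr (hpres g hg x)
    let ψ1 : N →* Perm {x // z x = x} :=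
      { toFun := fun g => Equiv.Perm.subtypePerm (g : Perm α) (fun x => (hpres g g.2 x).symm)
        map_one' := by
          ext x
          simp [Equiv.Perm.subtypePerm_apply]
        map_mul' := fun g h => by
          ext x
          rfl }
    let ψ2 : N →* Perm {x // ¬z x = x} :=
      { toFun := fun g => Equiv.Perm.subtypePerm (g : Perm α) (fun x => (hpres' g g.2 x).symm)
        map_one' := by
          ext x
          simp [Equiv.Perm.subtypePerm_apply]
        map_mul' := fun g h => by
          ext x
          rfl }
    set a := Nat.card {x // z x = x} with hadef
    set b := Nat.card {x // ¬z x = x} with hbdef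
    have hab : a + b = Nat.card α := by
      rw [hadef, hbdef, ← Nat.card_sum]
      exact Nat.card_congr (Equiv.sumCompl _)
    have ha1 : 1 ≤ a := Nat.card_pos_iff.mpr ⟨⟨⟨hfix.choose, hfix.choose_spec⟩⟩, inferInstance⟩
    have hb1 : 1 ≤ b := Nat.card_pos_iff.mpr ⟨⟨⟨hmoved.choose, hmoved.choose_spec⟩⟩, inferInstance⟩
    -- N embeds into the product of the two restriction images
    have hinj : Function.Injective
        (fun g : N => ((⟨ψ1 g, g, rfl⟩ : ψ1.range), (⟨ψ2 g, g, rfl⟩ : ψ2.range))) := by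
      intro g h hgh
      have e1 : ψ1 g = ψ1 h := congrArg Subtype.val (congrArg Prod.fst hgh)
      have e2 : ψ2 g = ψ2 h := congrArg Subtype.val (congrArg Prod.snd hgh)
      have : (g : Perm α) = (h : Perm α) := by
        ext x
        by_cases hx : z x = x
        · have := Equiv.ext_iff.mp e1 ⟨x, hx⟩
          simpa [ψ1, Equiv.Perm.subtypePerm_apply, Subtype.ext_iff] using this
        · have := Equiv.ext_iff.mp e2 ⟨x, hx⟩
          simpa [ψ2, Equiv.Perm.subtypePerm_apply, Subtype.ext_iff] using this
      exact Subtype.ext this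
    have hcardN : Nat.card N ≤ Nat.card ψ1.range * Nat.card ψ2.range := by
      have := Nat.card_le_card_of_injective _ hinj
      rwa [Nat.card_prod] at this
    haveI := hN
    have hnil1 : Group.IsNilpotent ψ1.range :=
      nilpotent_of_surjective ψ1.rangeRestrict ψ1.rangeRestrict_surjective
    have hnil2 : Group.IsNilpotent ψ2.range :=
      nilpotent_of_surjective ψ2.rangeRestrict ψ2.rangeRestrict_surjective
    have hIH1 := IH a (by omega) _ inferInstance le_rfl ψ1.range hnil1
    have hIH2 := IH b (by omega) _ inferInstance le_rfl ψ2.range hnil2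
    calc Nat.card N ≤ Nat.card ψ1.range * Nat.card ψ2.range := hcardN
      _ ≤ 2 ^ a * 2 ^ b := Nat.mul_le_mul hIH1 hIH2
      _ = 2 ^ Nat.card α := by rw [← pow_add, hab]
  · -- Case B : z has no fixed point
    push_neg at hfix
    set G₀ := Subgroup.zpowers z with hG₀def
    set β := MulAction.orbitRel.Quotient ↥G₀ α with hβdef
    haveI hβfin : Finite β := Quotient.finite _
    -- the stabilizer of any point in ⟨z⟩ is trivial
    have hstab : ∀ (u : ↥G₀) (x : α), u • x = x → u = 1 := by
      intro u x hux
      obtain ⟨k, hk⟩ := Subgroup.mem_zpowers_iff.mp u.2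
      have hzkx : (z ^ k) x = x := by
        rw [← Equiv.Perm.smul_def, hk]
        exact hux
      have hdvd : (p : ℤ) ∣ k := by
        by_contra hndvd
        have hgcd : Int.gcd k p = 1 := by
          have h1 : (Int.gcd k p : ℤ) ∣ (p : ℤ) := Int.gcd_dvd_right _ _
          have h2 : Int.gcd k p ∣ p := by
            have := Int.natCast_dvd_natCast.mp (by exact_mod_cast h1)
            exact this
          rcases (Nat.Prime.eq_one_or_self_of_dvd hp _ h2) with h | h
          · exact h
          · exfalso
            apply hndvd
            have : (p : ℤ) ∣ k := by
              rw [← h]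
              exact Int.gcd_dvd_left _ _
            exact this
        obtain ⟨c, d, hcd⟩ := Int.isCoprime_iff_gcd_eq_one.mpr hgcd
        have hz_eq : z = (z ^ k) ^ c := by
          have hzp : z ^ (p : ℤ) = 1 := by
            rw [zpow_natCast, ← hzord]
            exact pow_orderOf_eq_one z
          calc z = z ^ (c * k + d * p) := by rw [hcd, zpow_one]
            _ = (z ^ k) ^ c * (z ^ (p : ℤ)) ^ d := by
              rw [zpow_add, ← zpow_mul, ← zpow_mul, mul_comm c k, mul_comm d (p : ℤ)]
            _ = (z ^ k) ^ c := by rw [hzp, one_zpow, mul_one]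
        have : z x = x := by
          rw [hz_eq]
          exact Equiv.Perm.zpow_apply_eq_self_of_apply_eq_self hzkx c
        exact hfix x this
      have hzk1 : z ^ k = 1 := by
        rw [← orderOf_dvd_iff_zpow_eq_one, hzord]
        exact hdvd
      ext
      rw [← hk, hzk1]
      rfl
    -- every orbit has exactly p elements
    have horb : ∀ ω : β, Nat.card ω.orbit = p := by
      intro ω
      have h1 : (ω.orbit : Set α) = MulAction.orbit ↥G₀ ω.out :=
        MulAction.orbitRel.Quotient.orbit_eq_orbit_out ω Quotient.out_eq'
      have h2 : MulAction.stabilizer ↥G₀ (ω.out : α) = ⊥ := by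
        rw [Subgroup.eq_bot_iff_forall]
        intro u hu
        exact hstab u _ hu
      calc Nat.card ω.orbit
          = Nat.card (MulAction.orbit ↥G₀ (ω.out : α)) := by rw [h1]
        _ = Nat.card (↥G₀ ⧸ MulAction.stabilizer ↥G₀ (ω.out : α)) :=
            Nat.card_congr (MulAction.orbitEquivQuotientStabilizer _ _)
        _ = Nat.card (↥G₀ ⧸ (⊥ : Subgroup ↥G₀)) := by rw [h2]
        _ = Nat.card ↥G₀ := Nat.card_congr (QuotientGroup.quotientBot (G := ↥G₀)).toEquiv
        _ = orderOf z := Nat.card_zpowers z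
        _ = p := hzord
    -- hence |α| = p * |β|
    have hαβ : Nat.card α = p * Nat.card β := by
      classical
      haveI := Fintype.ofFinite α
      haveI := Fintype.ofFinite β
      haveI : ∀ ω : β, Fintype ω.orbit := fun ω => Fintype.ofFinite _
      calc Nat.card α = Nat.card (Σ ω : β, ω.orbit) :=
            Nat.card_congr (MulAction.selfEquivSigmaOrbits' ↥G₀ α)
        _ = Fintype.card (Σ ω : β, ω.orbit) := Nat.card_eq_fintype_card
        _ = ∑ ω : β, Fintype.card ω.orbit := Fintype.card_sigma
        _ = ∑ ω : β, p := by
            apply Finset.sum_congr rfl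
            intro ω _
            rw [← Nat.card_eq_fintype_card, horb]
        _ = Fintype.card β * p := by rw [Finset.sum_const, Finset.card_univ, smul_eq_mul]
        _ = p * Nat.card β := by rw [Nat.card_eq_fintype_card, Nat.mul_comm]
    -- the homomorphism from N to the permutations of the set of orbits
    let φ : N →* Perm β :=
      { toFun := fun g => blockPerm z (g : Perm α) (hcommN _ g.2)
        map_one' := by
          ext q
          induction q using Quotient.inductionOn' with
          | h x => rfl
        map_mul' := fun g h => by
          ext q
          induction q using Quotient.inductionOn' with
          | h x => rfl }
    -- elements of the kernel of φ preserve every z-orbit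
    have hker : ∀ g : N, g ∈ φ.ker → ∀ x : α,
        (g : Perm α) x ∈ MulAction.orbit ↥G₀ x := by
      intro g hg x
      have h1 := Equiv.ext_iff.mp (MonoidHom.mem_ker.mp hg) (Quotient.mk'' x)
      have h2 : (Quotient.mk'' ((g : Perm α) x) : β) = Quotient.mk'' x := h1
      have h3 := Quotient.eq''.mp h2
      rw [MulAction.orbitRel_apply] at h3
      exact h3
    -- injection of the kernel into the product of the orbits
    let fK : φ.ker → ∀ ω : β, ω.orbit := fun g ω =>
      ⟨((g : N) : Perm α) ω.out, by
        rw [MulAction.orbitRel.Quotient.mem_orbit]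
        have h := hker (g : N) g.2 ω.out
        rw [← MulAction.orbitRel_apply] at h
        calc (Quotient.mk'' (((g : N) : Perm α) ω.out) : β)
            = Quotient.mk'' ω.out := Quotient.sound' h
          _ = ω := Quotient.out_eq' ω⟩
    have hKinj : Function.Injective fK := by
      intro g h hgh
      have hval : ∀ ω : β, ((g : N) : Perm α) ω.out = ((h : N) : Perm α) ω.out := by
        intro ω
        exact congrArg Subtype.val (congrFun hgh ω)
      apply Subtype.ext
      apply Subtype.ext
      apply Equiv.ext
      intro x
      set ω : β := Quotient.mk'' x with hωdef
      have hxorb : x ∈ MulAction.orbit ↥G₀ (ω.out : α) := by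
        rw [← MulAction.orbitRel_apply]
        exact Quotient.eq''.mp ((Quotient.out_eq' ω).symm)
      obtain ⟨u, hu⟩ := hxorb
      obtain ⟨k, hk⟩ := Subgroup.mem_zpowers_iff.mp u.2
      have hx : (z ^ k) ω.out = x := by
        rw [← Equiv.Perm.smul_def, hk]
        exact hu
      have hgz : Commute (z ^ k) ((g : N) : Perm α) := (hcommN _ (g : N).2).zpow_left k
      have hhz : Commute (z ^ k) ((h : N) : Perm α) := (hcommN _ (h : N).2).zpow_left k
      have egz := Equiv.ext_iff.mp hgz.eq ω.out
      have ehz := Equiv.ext_iff.mp hhz.eq ω.out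
      simp only [Equiv.Perm.mul_apply] at egz ehz
      calc ((g : N) : Perm α) x = ((g : N) : Perm α) ((z ^ k) ω.out) := by rw [hx]
        _ = (z ^ k) (((g : N) : Perm α) ω.out) := egz.symm
        _ = (z ^ k) (((h : N) : Perm α) ω.out) := by rw [hval ω]
        _ = ((h : N) : Perm α) ((z ^ k) ω.out) := ehz
        _ = ((h : N) : Perm α) x := by rw [hx]
    -- the kernel has at most p ^ |β| elements
    have hK : Nat.card φ.ker ≤ p ^ Nat.card β := by
      classical
      haveI := Fintype.ofFinite β
      have h1 := Nat.card_le_card_of_injective _ hKinj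
      have h2 : Nat.card (∀ ω : β, ω.orbit) = p ^ Nat.card β := by
        rw [Nat.card_pi]
        simp [horb, Finset.prod_const, Finset.card_univ, Nat.card_eq_fintype_card]
      rw [h2] at h1
      exact h1
    -- put everything together
    have hsplit : Nat.card N = Nat.card (N ⧸ φ.ker) * Nat.card φ.ker :=
      Subgroup.card_eq_card_quotient_mul_card_subgroup φ.ker
    have hquot : Nat.card (N ⧸ φ.ker) = Nat.card φ.range :=
      Nat.card_congr (QuotientGroup.quotientKerEquivRange φ).toEquiv
    haveI := hN
    have hnilr : Group.IsNilpotent φ.range :=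
      nilpotent_of_surjective φ.rangeRestrict φ.rangeRestrict_surjective
    have hβpos : 1 ≤ Nat.card β :=
      Nat.card_pos_iff.mpr ⟨⟨Quotient.mk'' hmoved.choose⟩, hβfin⟩
    have hβlt : Nat.card β < n := by
      have h3 : 2 * Nat.card β ≤ p * Nat.card β :=
        Nat.mul_le_mul_right _ hp.two_le
      omega
    have hIHr := IH (Nat.card β) hβlt β hβfin le_rfl φ.range hnilr
    have hquot' : Nat.card (N ⧸ φ.ker) ≤ 2 ^ Nat.card β := by
      rw [hquot]
      exact hIHr
    set m := Nat.card β with hmdef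
    obtain ⟨q, hq⟩ : ∃ q, p = q + 1 := ⟨p - 1, by have := hp.two_le; omega⟩
    have hple : p ≤ 2 ^ q := by
      have := Nat.lt_two_pow_self (n := q)
      omega
    calc Nat.card N = Nat.card (N ⧸ φ.ker) * Nat.card φ.ker := hsplit
      _ ≤ 2 ^ m * p ^ m := Nat.mul_le_mul hquot' hK
      _ ≤ 2 ^ m * (2 ^ q) ^ m := Nat.mul_le_mul_left _ (Nat.pow_le_pow_left hple m)
      _ = 2 ^ (m + q * m) := by rw [← pow_mul, ← pow_add]
      _ = 2 ^ (p * m) := by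
          congr 1
          rw [hq]
          ring
      _ = 2 ^ Nat.card α := by rw [← hαβ]

end Main

/-- Every nilpotent subgroup of the symmetric group on `n` points has order at most `2^n`. -/
theorem nilpotent_subgroup_perm_card_le {n : ℕ} (N : Subgroup (Equiv.Perm (Fin n)))
    (hN : Group.IsNilpotent N) :
    Nat.card N ≤ 2 ^ n := by
  have := aux_main n (Fin n) inferInstance (by simp) N hN
  simpa using this
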